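/- For every integer s ≥ 2 and every real z with −(s+4)(s−1)/3 ≤ z ≤ 0, one has −1 ≤ 1 + w_1·z ≤ 1 and hence |R_s(z)| ≤ 1. In particular, the real stability interval of the s-stage RKG2 method has length (s+4)(s−1)/3, which grows quadratically in s. -/

import Mathlib

/-- The Gegenbauer polynomials with parameter 3/2:
`C_0(x) = 1`, `C_1(x) = 3x`, and
`C_j(x) = ((2j+1)/j)·x·C_{j-1}(x) − ((j+1)/j)·C_{j-2}(x)` for `j ≥ 2`. -/
noncomputable def gegenbauer : ℕ → ℝ → ℝ
  | 0, _ => 1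
  | 1, x => 3 * x
  | (j + 2), x =>
      (2 * ((j : ℝ) + 2) + 1) / ((j : ℝ) + 2) * x * gegenbauer (j + 1) x
        - (((j : ℝ) + 2) + 1) / ((j : ℝ) + 2) * gegenbauer j x

/-- `gg k = (3/2)_k / k!`. -/
noncomputable def gg : ℕ → ℝ
  | 0 => 1
  | (k+1) => gg k * (2 * (k:ℝ) + 3) / (2 * (k:ℝ) + 2)

lemma gg_pos (k : ℕ) : 0 < gg k := by
  induction k with
  | zero => norm_num [gg]
  | succ k ih =>
    rw [gg]
    positivity

/-- Fourier coefficients of Gegenbauer(3/2). -/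
noncomputable def gc (n k : ℕ) : ℝ := gg k * gg (n - k)

lemma gc_pos (n k : ℕ) : 0 < gc n k := mul_pos (gg_pos k) (gg_pos _)

noncomputable def gS (n : ℕ) (θ : ℝ) : ℝ :=
  ∑ k ∈ Finset.range (n+1), gc n k * Real.cos (((n:ℝ) - 2*k) * θ)

lemma coeff_rec (j k : ℕ) (hk : k ≤ j) :
    gc (j+2) (k+1) =
      (2*(j:ℝ)+5)/((j:ℝ)+2)/2 * (gc (j+1) (k+1) + gc (j+1) k)
        - ((j:ℝ)+3)/((j:ℝ)+2) * gc j k := by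
  obtain ⟨l, rfl⟩ : ∃ l, j = k + l := ⟨j - k, by omega⟩
  have h1 : k + 1 + l + 1 - (k + 1) = l + 1 := by omega
  have h2 : k + 1 + l - (k + 1) = l := by omega
  have h3 : k + l + 1 - k = l + 1 := by omega
  have h4 : k + l - k = l := by omega
  have h5 : k + l + 2 - (k+1) = l + 1 := by omega
  simp only [gc, show k+2+l = k+1+l+1 by omega, show k+1+l+1-(k+1) = l+1 from h1,
    show k+l+2-(k+1) = l+1 from h5, h3, h4, gg]
  have hgk := gg_pos k
  have hgl := gg_pos l
  have hk2 : (2*(k:ℝ)+2) ≠ 0 := by positivity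
  have hl2 : (2*(l:ℝ)+2) ≠ 0 := by positivity
  have hj2 : ((k:ℝ)+(l:ℝ)+2) ≠ 0 := by positivity
  push_cast
  field_simp
  simp only [Nat.add_sub_cancel_left]
  ring

lemma gc_edge0 (j : ℕ) :
    gc (j+2) 0 = (2*(j:ℝ)+5)/((j:ℝ)+2)/2 * gc (j+1) 0 := by
  have h2 : ((j:ℝ)+2) ≠ 0 := by positivity
  simp only [gc, Nat.sub_zero, gg]
  push_cast
  field_simp
  ring

lemma gc_edge1 (j : ℕ) :
    gc (j+2) (j+2) = (2*(j:ℝ)+5)/((j:ℝ)+2)/2 * gc (j+1) (j+1) := by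
  have h2 : ((j:ℝ)+2) ≠ 0 := by positivity
  simp only [gc, Nat.sub_self, gg]
  push_cast
  field_simp
  ring

lemma gS_rec (j : ℕ) (θ : ℝ) :
    gS (j+2) θ = (2*(j:ℝ)+5)/((j:ℝ)+2) * Real.cos θ * gS (j+1) θ
      - ((j:ℝ)+3)/((j:ℝ)+2) * gS j θ := by
  set A : ℝ := (2*(j:ℝ)+5)/((j:ℝ)+2) with hA
  set B : ℝ := ((j:ℝ)+3)/((j:ℝ)+2) with hB
  set T : ℕ → ℝ := fun k => Real.cos (((j:ℝ)+2-2*k) * θ) with hT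
  set P1 : ℝ := ∑ k ∈ Finset.range (j+1), gc (j+1) (k+1) * T (k+1) with hP1
  set P2 : ℝ := ∑ k ∈ Finset.range (j+1), gc (j+1) k * T (k+1) with hP2
  set P3 : ℝ := ∑ k ∈ Finset.range (j+1), gc j k * T (k+1) with hP3
  set Q : ℝ := ∑ k ∈ Finset.range (j+1), gc (j+2) (k+1) * T (k+1) with hQ
  have key : ∀ (m : ℝ), 2 * (Real.cos θ * Real.cos (m*θ))
      = Real.cos ((m+1)*θ) + Real.cos ((m-1)*θ) := by
    intro m
    have h1 : Real.cos ((m+1)*θ) = Real.cos (m*θ + θ) := by ring_nf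
    have h2 : Real.cos ((m-1)*θ) = Real.cos (m*θ - θ) := by ring_nf
    rw [h1, h2, Real.cos_add, Real.cos_sub]
    ring
  have e2 : gS (j+2) θ = ∑ k ∈ Finset.range (j+3), gc (j+2) k * T k := by
    unfold gS
    exact Finset.sum_congr rfl (fun k _ => by simp only [hT]; congr 2; push_cast; ring)
  have e1 : gS (j+1) θ = ∑ k ∈ Finset.range (j+2), gc (j+1) k * Real.cos ((((j:ℝ)+1) - 2*k) * θ) := by
    unfold gS
    exact Finset.sum_congr rfl (fun k _ => by congr 2; push_cast; ring)
  have h1 : gS (j+2) θ = Q + gc (j+2) (j+2) * T (j+2) + gc (j+2) 0 * T 0 := by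
    rw [e2, Finset.sum_range_succ' (fun k => gc (j+2) k * T k) (j+2), Finset.sum_range_succ]
  have h3 : 2 * (Real.cos θ * gS (j+1) θ)
      = (gc (j+1) 0 * T 0 + P1) + (P2 + gc (j+1) (j+1) * T (j+2)) := by
    rw [e1, Finset.mul_sum, Finset.mul_sum]
    have step : ∀ k ∈ Finset.range (j+2),
        2 * (Real.cos θ * (gc (j+1) k * Real.cos ((((j:ℝ)+1) - 2*k) * θ)))
          = gc (j+1) k * T k + gc (j+1) k * T (k+1) := by
      intro k _
      have hkey := key (((j:ℝ)+1) - 2*k)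
      have e3 : ((j:ℝ)+1-2*k+1) = (j:ℝ)+2-2*k := by ring
      have e4 : ((j:ℝ)+1-2*k-1) = (j:ℝ)+2-2*((k:ℝ)+1) := by ring
      rw [e3, e4] at hkey
      simp only [hT]
      push_cast
      linear_combination gc (j+1) k * hkey
    rw [Finset.sum_congr rfl step, Finset.sum_add_distrib,
        Finset.sum_range_succ' (fun k => gc (j+1) k * T k) (j+1),
        Finset.sum_range_succ (fun k => gc (j+1) k * T (k+1)) (j+1)]
    ring
  have h4 : gS j θ = P3 := by
    unfold gS
    exact Finset.sum_congr rfl (fun k _ => by simp only [hT]; congr 2; push_cast; ring)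
  have h2 : Q = (A/2)*P1 + (A/2)*P2 - B*P3 := by
    rw [hQ, hP1, hP2, hP3, Finset.mul_sum, Finset.mul_sum, Finset.mul_sum,
        ← Finset.sum_add_distrib, ← Finset.sum_sub_distrib]
    refine Finset.sum_congr rfl (fun k hk => ?_)
    have hk' : k ≤ j := by simpa using Nat.lt_succ_iff.mp (Finset.mem_range.mp hk)
    have := coeff_rec j k hk'
    rw [hA, hB]
    linear_combination T (k+1) * this
  have h5 := gc_edge0 j
  have h6 := gc_edge1 j
  rw [hA, hB] at *
  linear_combination h1 + h2 - ((2*(j:ℝ)+5)/((j:ℝ)+2)/2)*h3 + (((j:ℝ)+3)/((j:ℝ)+2))*h4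
    + T 0 * h5 + T (j+2) * h6

lemma geg_cos (n : ℕ) (θ : ℝ) : gegenbauer n (Real.cos θ) = gS n θ := by
  induction n using Nat.twoStepInduction with
  | zero =>
    simp [gegenbauer, gS, gc, gg]
  | one =>
    rw [gegenbauer, gS]
    rw [Finset.sum_range_succ, Finset.sum_range_succ, Finset.sum_range_zero]
    simp only [gc, gg]
    push_cast
    norm_num
    simp only [gg]
    ring
  | more j ih1 ih2 =>
    rw [gegenbauer, ih1, ih2, gS_rec]
    ring

lemma geg_one (n : ℕ) : gegenbauer n 1 = ((n:ℝ)+1)*((n:ℝ)+2)/2 := by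
  induction n using Nat.twoStepInduction with
  | zero => norm_num [gegenbauer]
  | one => norm_num [gegenbauer]
  | more j ih1 ih2 =>
    rw [gegenbauer, ih1, ih2]
    have h2 : ((j:ℝ)+2) ≠ 0 := by positivity
    push_cast
    field_simp
    ring

lemma geg_bound (n : ℕ) (x : ℝ) (h1 : -1 ≤ x) (h2 : x ≤ 1) :
    |gegenbauer n x| ≤ ((n:ℝ)+1)*((n:ℝ)+2)/2 := by
  obtain ⟨θ, hθ⟩ : ∃ θ, Real.cos θ = x := ⟨Real.arccos x, Real.cos_arccos h1 h2⟩
  rw [← hθ, geg_cos, gS]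
  calc |∑ k ∈ Finset.range (n+1), gc n k * Real.cos (((n:ℝ) - 2*k) * θ)|
      ≤ ∑ k ∈ Finset.range (n+1), |gc n k * Real.cos (((n:ℝ) - 2*k) * θ)| :=
        Finset.abs_sum_le_sum_abs _ _
    _ ≤ ∑ k ∈ Finset.range (n+1), gc n k := by
        refine Finset.sum_le_sum fun k _ => ?_
        rw [abs_mul, abs_of_pos (gc_pos n k)]
        exact mul_le_of_le_one_right (gc_pos n k).le (Real.abs_cos_le_one _)
    _ = gS n 0 := by simp [gS]
    _ = gegenbauer n 1 := by rw [← geg_cos, Real.cos_zero]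
    _ = ((n:ℝ)+1)*((n:ℝ)+2)/2 := geg_one n

/-- The RKG2 coefficient `b_j = 4(j−1)(j+4)/(3j(j+1)(j+2)(j+3))`. -/
noncomputable def rkg2B (j : ℕ) : ℝ :=
  4 * ((j : ℝ) - 1) * ((j : ℝ) + 4) /
    (3 * (j : ℝ) * ((j : ℝ) + 1) * ((j : ℝ) + 2) * ((j : ℝ) + 3))

/-- The RKG2 coefficient `a_j = 1 − ((j+1)(j+2)/2)·b_j`. -/
noncomputable def rkg2A (j : ℕ) : ℝ :=
  1 - ((j : ℝ) + 1) * ((j : ℝ) + 2) / 2 * rkg2B j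

/-- The RKG2 parameter `w_1 = 6/((s+4)(s−1))`. -/
noncomputable def rkg2W (s : ℕ) : ℝ := 6 / (((s : ℝ) + 4) * ((s : ℝ) - 1))

/-- The RKG2 stability polynomial `R_j(z) = a_j + b_j·C_j(1 + w_1·z)` where `w_1` is built from
the stage number `s`. -/
noncomputable def rkg2R (s j : ℕ) (z : ℝ) : ℝ :=
  rkg2A j + rkg2B j * gegenbauer j (1 + rkg2W s * z)

/-- For every integer `s ≥ 2` and every real `z` with `−(s+4)(s−1)/3 ≤ z ≤ 0`, one has
`−1 ≤ 1 + w_1·z ≤ 1` and hence `|R_s(z)| ≤ 1`: the real stability interval of the `s`-stage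
RKG2 method contains `[−(s+4)(s−1)/3, 0]`, whose length grows quadratically in `s`. -/
theorem rkg2_real_stability_interval (s : ℕ) (hs : 2 ≤ s) (z : ℝ)
    (h₁ : -(((s : ℝ) + 4) * ((s : ℝ) - 1) / 3) ≤ z) (h₂ : z ≤ 0) :
    (-1 ≤ 1 + rkg2W s * z ∧ 1 + rkg2W s * z ≤ 1) ∧ |rkg2R s s z| ≤ 1 := by
  have hS : (2:ℝ) ≤ (s:ℝ) := by exact_mod_cast hs
  have hD : 0 < ((s:ℝ)+4)*((s:ℝ)-1) := by nlinarith
  have hw : 0 < rkg2W s := by unfold rkg2W; positivity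
  have hx1 : 1 + rkg2W s * z ≤ 1 := by
    have := mul_nonpos_of_nonneg_of_nonpos hw.le h₂
    linarith
  have hx0 : -1 ≤ 1 + rkg2W s * z := by
    have h6 : (-2:ℝ) ≤ rkg2W s * z := by
      unfold rkg2W
      rw [div_mul_eq_mul_div, le_div_iff₀ hD]
      nlinarith
    linarith
  refine ⟨⟨hx0, hx1⟩, ?_⟩
  have hC := geg_bound s (1 + rkg2W s * z) hx0 hx1
  have hb : 0 ≤ rkg2B s := by
    unfold rkg2B
    apply div_nonneg
    · nlinarith
    · positivity
  have hq : 0 < 3 * (s:ℝ) * ((s:ℝ)+1) * ((s:ℝ)+2) * ((s:ℝ)+3) := by nlinarith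
  have hMb : ((s:ℝ)+1)*((s:ℝ)+2)/2 * rkg2B s ≤ 1 := by
    unfold rkg2B
    rw [mul_div_assoc', div_le_one hq]
    nlinarith
  unfold rkg2R rkg2A
  set C := gegenbauer s (1 + rkg2W s * z) with hCdef
  set M := ((s:ℝ)+1)*((s:ℝ)+2)/2 with hM
  calc |(1 - M * rkg2B s) + rkg2B s * C|
      ≤ |1 - M * rkg2B s| + |rkg2B s * C| := abs_add_le _ _
    _ = (1 - M * rkg2B s) + rkg2B s * |C| := by
        rw [abs_of_nonneg (by linarith), abs_mul, abs_of_nonneg hb]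
    _ ≤ (1 - M * rkg2B s) + rkg2B s * M := by
        have := mul_le_mul_of_nonneg_left hC hb
        linarith
    _ = 1 := by ring
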